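/- Let L : E → F be Fredholm of index 0 between Banach spaces, and let A be a corrector of the stabilized operator L_{m,m} : E ⊕ ℝ^m → F ⊕ ℝ^m (where L_{m,m}(x,y) = (Lx, 0)). If C is an automorphism of ℝ^m, then A and A ∘ (id_E ⊕ C) are equivalent correctors of L_{m,m} if and only if det(C) > 0. -/

import Mathlib

open LinearMap Submodule


lemma det_eq_det_restrict {W : Type*} [AddCommGroup W] [Module ℝ W] [FiniteDimensional ℝ W]
    (g : W →ₗ[ℝ] W) (U : Submodule ℝ W) (h : ∀ x, g x - x ∈ U)
    (hU : ∀ x ∈ U, g x ∈ U) :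
    LinearMap.det g = LinearMap.det (g.restrict hU) := by
  obtain ⟨U', hc⟩ := Submodule.exists_isCompl U
  let bU := Module.finBasis ℝ U
  let bU' := Module.finBasis ℝ U'
  let e := Submodule.prodEquivOfIsCompl U U' hc
  let b := (bU.prod bU').map e
  have hsymm : ∀ w : W, (hw : w ∈ U) → e.symm w = ((⟨w, hw⟩ : U), (0 : U')) := by
    intro w hw
    have := Submodule.prodEquivOfIsCompl_symm_apply_left (p := U) (q := U') hc ⟨w, hw⟩
    simpa [e] using this
  have key : ∀ w : W, w ∈ U → ∀ k, b.repr w (Sum.inr k) = 0 := by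
    intro w hw k
    simp [b, Module.Basis.map_repr, hsymm w hw, Module.Basis.prod_repr_inr]
  have key' : ∀ w : W, (hw : w ∈ U) → ∀ i, b.repr w (Sum.inl i) = bU.repr ⟨w, hw⟩ i := by
    intro w hw i
    simp [b, Module.Basis.map_repr, hsymm w hw, Module.Basis.prod_repr_inl]
  have hb_inl : ∀ i, b (Sum.inl i) = (bU i : W) := by
    intro i
    simp [b, Module.Basis.map_apply, e, Submodule.coe_prodEquivOfIsCompl',
      Module.Basis.prod_apply_inl_fst, Module.Basis.prod_apply_inl_snd]
  rw [← LinearMap.det_toMatrix b, ← LinearMap.det_toMatrix bU (g.restrict hU)]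
  rw [← Matrix.fromBlocks_toBlocks (LinearMap.toMatrix b b g)]
  have h21 : (LinearMap.toMatrix b b g).toBlocks₂₁ = 0 := by
    ext k i
    simp only [Matrix.toBlocks₂₁, Matrix.of_apply, LinearMap.toMatrix_apply, Matrix.zero_apply]
    rw [hb_inl]
    exact key _ (hU _ (bU i).2) k
  have h22 : (LinearMap.toMatrix b b g).toBlocks₂₂ = 1 := by
    ext k j
    simp only [Matrix.toBlocks₂₂, Matrix.of_apply, LinearMap.toMatrix_apply]
    have : g (b (Sum.inr j)) = b (Sum.inr j) + (g (b (Sum.inr j)) - b (Sum.inr j)) :=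
      (add_sub_cancel _ _).symm
    rw [this, map_add, Finsupp.add_apply, key _ (h _) k, add_zero, Module.Basis.repr_self]
    by_cases hkj : k = j
    · simp [hkj, Matrix.one_apply, Finsupp.single_apply]
    · simp [hkj, Matrix.one_apply, Finsupp.single_apply, Ne.symm hkj]
  have h11 : (LinearMap.toMatrix b b g).toBlocks₁₁ = LinearMap.toMatrix bU bU (g.restrict hU) := by
    ext i' i
    simp only [Matrix.toBlocks₁₁, Matrix.of_apply, LinearMap.toMatrix_apply]
    rw [hb_inl]
    exact key' _ (hU _ (bU i).2) i'
  rw [h21, h22, h11, Matrix.det_fromBlocks_zero₂₁, Matrix.det_one, mul_one]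

lemma det_restrict_eq_det_restrict {V : Type*} [AddCommGroup V] [Module ℝ V]
    (f : V →ₗ[ℝ] V) {F' F₀ : Submodule ℝ V} (hle : F' ≤ F₀)
    [FiniteDimensional ℝ F₀]
    (h : ∀ x, f x - x ∈ F')
    (h₀ : ∀ x ∈ F₀, f x ∈ F₀) (h' : ∀ x ∈ F', f x ∈ F') :
    LinearMap.det (f.restrict h₀) = LinearMap.det (f.restrict h') := by
  set g := f.restrict h₀ with hg_def
  let U : Submodule ℝ F₀ := F'.comap F₀.subtype
  have hg : ∀ x : F₀, g x - x ∈ U := by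
    intro x
    simp only [U, Submodule.mem_comap, Submodule.coe_subtype, AddSubgroupClass.coe_sub]
    have : (g x : V) = f x := rfl
    rw [this]
    exact h (x : V)
  have hU : ∀ y ∈ U, g y ∈ U := by
    intro y hy
    simp only [U, Submodule.mem_comap, Submodule.coe_subtype] at hy ⊢
    exact h' _ hy
  rw [det_eq_det_restrict g U hg hU]
  -- now conjugate g.restrict hU : U →ₗ U to f.restrict h' : F' →ₗ F'
  let φ : U ≃ₗ[ℝ] F' := Submodule.comapSubtypeEquivOfLe hle
  have key : (φ : U →ₗ[ℝ] F') ∘ₗ (g.restrict hU) ∘ₗ (φ.symm : F' →ₗ[ℝ] U) = f.restrict h' := by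
    ext x
    have h1 : ((φ.symm x : F₀) : V) = (x : V) := by
      have := Submodule.comapSubtypeEquivOfLe_apply_coe hle (φ.symm x)
      rw [show φ (φ.symm x) = x from φ.apply_symm_apply x] at this
      exact this.symm
    simp only [coe_comp, Function.comp_apply, LinearEquiv.coe_coe]
    rw [Submodule.comapSubtypeEquivOfLe_apply_coe]
    show (f ((φ.symm x : F₀) : V)) = f (x : V)
    rw [h1]
  rw [← key, LinearMap.det_conj]

/-- For `L` Fredholm of index 0, a corrector `A` of the stabilized operator
`L_{m,m} : E ⊕ ℝᵐ → F ⊕ ℝᵐ`, `(x,y) ↦ (Lx, 0)`, and an automorphism `C` of `ℝᵐ`,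
the correctors `A` and `A ∘ (id_E ⊕ C)` are equivalent iff `det C > 0`. -/
theorem stmt12 {E F : Type*}
    [NormedAddCommGroup E] [NormedSpace ℝ E] [CompleteSpace E]
    [NormedAddCommGroup F] [NormedSpace ℝ F] [CompleteSpace F]
    {m : ℕ} (L : E →L[ℝ] F)
    (D : (E × (Fin m → ℝ)) →L[ℝ] (F × (Fin m → ℝ)))
    (hD : ∀ v : E × (Fin m → ℝ), D v = (L v.1, 0))
    (A : (E × (Fin m → ℝ)) →L[ℝ] (F × (Fin m → ℝ)))
    (hA : FiniteDimensional ℝ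
      (LinearMap.range (A : (E × (Fin m → ℝ)) →ₗ[ℝ] (F × (Fin m → ℝ)))))
    (eP : (E × (Fin m → ℝ)) ≃L[ℝ] (F × (Fin m → ℝ)))
    (heP : (eP : (E × (Fin m → ℝ)) →L[ℝ] (F × (Fin m → ℝ))) = D + A)
    (C : (Fin m → ℝ) ≃L[ℝ] (Fin m → ℝ))
    (B : (E × (Fin m → ℝ)) →L[ℝ] (F × (Fin m → ℝ)))
    (hBdef : B = A.comp
      (ContinuousLinearMap.prodMap (ContinuousLinearMap.id ℝ E)
        (C : (Fin m → ℝ) →L[ℝ] (Fin m → ℝ))))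
    (eQ : (E × (Fin m → ℝ)) ≃L[ℝ] (F × (Fin m → ℝ)))
    (heQ : (eQ : (E × (Fin m → ℝ)) →L[ℝ] (F × (Fin m → ℝ))) = D + B) :
    ∀ (F₀ : Submodule ℝ (F × (Fin m → ℝ))), FiniteDimensional ℝ F₀ →
      LinearMap.range ((A - B) : (E × (Fin m → ℝ)) →ₗ[ℝ] (F × (Fin m → ℝ))) ≤ F₀ →
      ∀ h₀ : ∀ x ∈ F₀,
        (((D + B).comp (eP.symm : (F × (Fin m → ℝ)) →L[ℝ] (E × (Fin m → ℝ)))) :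
          (F × (Fin m → ℝ)) →ₗ[ℝ] (F × (Fin m → ℝ))) x ∈ F₀,
      (0 < LinearMap.det
          (LinearMap.restrict
            (((D + B).comp (eP.symm : (F × (Fin m → ℝ)) →L[ℝ] (E × (Fin m → ℝ)))) :
              (F × (Fin m → ℝ)) →ₗ[ℝ] (F × (Fin m → ℝ))) h₀) ↔
        0 < LinearMap.det (C : (Fin m → ℝ) →ₗ[ℝ] (Fin m → ℝ))) := by
  intro F₀ hFD hrange h₀
  -- notation
  set Tl : (F × (Fin m → ℝ)) →ₗ[ℝ] (F × (Fin m → ℝ)) :=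
    (((D + B).comp (eP.symm : (F × (Fin m → ℝ)) →L[ℝ] (E × (Fin m → ℝ)))) :
      (F × (Fin m → ℝ)) →ₗ[ℝ] (F × (Fin m → ℝ))) with hTl
  let Sl : (E × (Fin m → ℝ)) →ₗ[ℝ] (E × (Fin m → ℝ)) :=
    (LinearMap.id : E →ₗ[ℝ] E).prodMap (C : (Fin m → ℝ) →ₗ[ℝ] (Fin m → ℝ))
  let ePl : (E × (Fin m → ℝ)) ≃ₗ[ℝ] (F × (Fin m → ℝ)) := eP.toLinearEquiv
  -- Step 1: D + B = (D + A) ∘ (id × C)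
  have hDcomp : D.comp (ContinuousLinearMap.prodMap (ContinuousLinearMap.id ℝ E)
      (C : (Fin m → ℝ) →L[ℝ] (Fin m → ℝ))) = D := by
    refine ContinuousLinearMap.ext fun v => ?_
    show D (v.1, C v.2) = D v
    rw [hD, hD]
  have hDB : D + B = (D + A).comp (ContinuousLinearMap.prodMap (ContinuousLinearMap.id ℝ E)
      (C : (Fin m → ℝ) →L[ℝ] (Fin m → ℝ))) := by
    rw [hBdef, ContinuousLinearMap.add_comp, hDcomp]
  -- Step 2: Tl = ePl ∘ Sl ∘ ePl.symm  (as application fact)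
  have hSl_apply : ∀ x : E × (Fin m → ℝ), Sl x = (x.1, C x.2) := fun x => rfl
  have hT_apply : ∀ y : F × (Fin m → ℝ), Tl y = ePl (Sl (ePl.symm y)) := by
    intro y
    have h1 : Tl y = (D + B) (eP.symm y) := rfl
    rw [h1, hDB, ← heP]
    rfl
  have hTS : ∀ x : E × (Fin m → ℝ), Tl (ePl x) = ePl (Sl x) := by
    intro x
    rw [hT_apply]
    congr 1
    rw [LinearEquiv.symm_apply_apply]
  -- Step 3: T y - y ∈ F₀
  have hTsub : ∀ y : F × (Fin m → ℝ), Tl y - y ∈ F₀ := by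
    intro y
    have h1 : Tl y = (D + B) (eP.symm y) := rfl
    have h2 : (D + B) (eP.symm y) = (D + A) (eP.symm y) - ((A - B) : _ →L[ℝ] _) (eP.symm y) := by
      simp only [ContinuousLinearMap.add_apply, ContinuousLinearMap.sub_apply]
      abel
    have h3 : (D + A) (eP.symm y) = y := by
      rw [← heP]; exact eP.apply_symm_apply y
    have h4 : Tl y - y = -(((A - B) : _ →L[ℝ] _) (eP.symm y)) := by
      rw [h1, h2, h3]; abel
    rw [h4]
    exact neg_mem (hrange ⟨eP.symm y, rfl⟩)
  -- the pulled-back subspace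
  let G₀ : Submodule ℝ (E × (Fin m → ℝ)) := F₀.comap (ePl : (E × (Fin m → ℝ)) →ₗ[ℝ] _)
  have hG₀mem : ∀ x : E × (Fin m → ℝ), x ∈ G₀ ↔ ePl x ∈ F₀ := fun x => Iff.rfl
  haveI hFDG₀ : FiniteDimensional ℝ G₀ := by
    have hmapeq : F₀.map (ePl.symm : (F × (Fin m → ℝ)) →ₗ[ℝ] _) = G₀ := by
      rw [Submodule.map_equiv_eq_comap_symm, LinearEquiv.symm_symm]
    rw [← hmapeq]
    exact (ePl.symm.submoduleMap F₀).finiteDimensional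
  have hS₀ : ∀ x ∈ G₀, Sl x ∈ G₀ := by
    intro x hx
    rw [hG₀mem, ← hTS]
    exact h₀ _ hx
  -- Step 4: det (Tl.restrict h₀) = det (Sl.restrict hS₀)
  have hmapG : G₀.map (ePl : (E × (Fin m → ℝ)) →ₗ[ℝ] _) = F₀ :=
    Submodule.map_comap_eq_of_surjective ePl.surjective F₀
  let ψ : G₀ ≃ₗ[ℝ] F₀ := (ePl.submoduleMap G₀).trans (LinearEquiv.ofEq _ _ hmapG)
  have hψcoe : ∀ x : G₀, (ψ x : F × (Fin m → ℝ)) = ePl x := fun x => rfl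
  have hcomm : (ψ : G₀ →ₗ[ℝ] F₀) ∘ₗ Sl.restrict hS₀ = (Tl.restrict h₀) ∘ₗ (ψ : G₀ →ₗ[ℝ] F₀) := by
    refine LinearMap.ext fun x => Subtype.ext ?_
    show ((ψ (Sl.restrict hS₀ x)) : F × (Fin m → ℝ)) = ((Tl.restrict h₀ (ψ x)) : F × (Fin m → ℝ))
    rw [hψcoe]
    show ePl (Sl x) = Tl (ψ x : F × (Fin m → ℝ))
    rw [hψcoe, hTS]
  have hdet1 : LinearMap.det (Tl.restrict h₀) = LinearMap.det (Sl.restrict hS₀) := by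
    have : Sl.restrict hS₀ =
        (ψ.symm : F₀ →ₗ[ℝ] G₀) ∘ₗ (Tl.restrict h₀) ∘ₗ ((ψ.symm).symm : G₀ →ₗ[ℝ] F₀) := by
      rw [LinearEquiv.symm_symm, ← hcomm, ← LinearMap.comp_assoc]
      refine LinearMap.ext fun x => ?_
      simp
    rw [this, LinearMap.det_conj]
  -- the finite-rank range of Sl - id
  let FR : Submodule ℝ (E × (Fin m → ℝ)) := LinearMap.range (Sl - LinearMap.id)
  have hSsub : ∀ x, Sl x - x ∈ FR := fun x => ⟨x, rfl⟩
  have hFRG₀ : FR ≤ G₀ := by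
    rintro _ ⟨x, rfl⟩
    rw [LinearMap.sub_apply, LinearMap.id_apply, hG₀mem, map_sub, ← hTS]
    have := hTsub (ePl x)
    simpa using this
  -- the subspace ⊥ × ⊤
  let P' : Submodule ℝ (E × (Fin m → ℝ)) :=
    (⊥ : Submodule ℝ E).prod (⊤ : Submodule ℝ (Fin m → ℝ))
  have hFRP' : FR ≤ P' := by
    rintro _ ⟨x, rfl⟩
    constructor
    · show (Sl x - x).1 ∈ (⊥ : Submodule ℝ E)
      simp [hSl_apply]
    · trivial
  -- equiv P' ≃ ℝ^m
  let toFn : P' →ₗ[ℝ] (Fin m → ℝ) := (LinearMap.snd ℝ E (Fin m → ℝ)).comp P'.subtype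
  let fro : (Fin m → ℝ) →ₗ[ℝ] P' :=
    LinearMap.codRestrict P' ((LinearMap.prod (0 : (Fin m → ℝ) →ₗ[ℝ] E) LinearMap.id))
      (fun y => ⟨by simp, trivial⟩)
  have hP'fst : ∀ x : P', (x : E × (Fin m → ℝ)).1 = 0 := fun x => x.2.1
  let χ : P' ≃ₗ[ℝ] (Fin m → ℝ) := LinearEquiv.ofLinear toFn fro
    (LinearMap.ext fun y => rfl)
    (LinearMap.ext fun x => Subtype.ext (Prod.ext
      (show (0 : E) = (x : E × (Fin m → ℝ)).1 from (hP'fst x).symm) rfl))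
  haveI : FiniteDimensional ℝ P' := LinearEquiv.finiteDimensional χ.symm
  haveI : FiniteDimensional ℝ FR := Submodule.finiteDimensional_of_le hFRP'
  have hSFR : ∀ x ∈ FR, Sl x ∈ FR := by
    intro x hx
    have : Sl x = x + (Sl x - x) := by abel
    rw [this]
    exact add_mem hx (hSsub x)
  have hSP' : ∀ x ∈ P', Sl x ∈ P' := by
    intro x hx
    have : Sl x = x + (Sl x - x) := by abel
    rw [this]
    exact add_mem hx (hFRP' (hSsub x))
  -- Step 5-7: move from G₀ to P'
  have hdet2 : LinearMap.det (Sl.restrict hS₀) = LinearMap.det (Sl.restrict hSFR) :=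
    det_restrict_eq_det_restrict Sl hFRG₀ hSsub hS₀ hSFR
  have hdet3 : LinearMap.det (Sl.restrict hSP') = LinearMap.det (Sl.restrict hSFR) :=
    det_restrict_eq_det_restrict Sl hFRP' hSsub hSP' hSFR
  -- Step 8: det of restriction to P' is det C
  have hdet4 : LinearMap.det (Sl.restrict hSP') =
      LinearMap.det (C : (Fin m → ℝ) →ₗ[ℝ] (Fin m → ℝ)) := by
    have hconj : (C : (Fin m → ℝ) →ₗ[ℝ] (Fin m → ℝ)) =
        (χ : P' →ₗ[ℝ] (Fin m → ℝ)) ∘ₗ (Sl.restrict hSP') ∘ₗ (χ.symm : (Fin m → ℝ) →ₗ[ℝ] P') := by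
      refine LinearMap.ext fun y => ?_
      show C y = ((Sl.restrict hSP' (χ.symm y)) : E × (Fin m → ℝ)).2
      have h5 : ((χ.symm y) : E × (Fin m → ℝ)) = (0, y) := rfl
      show C y = (Sl ((χ.symm y) : E × (Fin m → ℝ))).2
      rw [h5, hSl_apply]
    rw [hconj, LinearMap.det_conj]
  rw [hdet1, hdet2, ← hdet3, hdet4]
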